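/- For every integer k ≥ 0 there exists a constant C_k > 0 such that for all ω ∈ (0, 1/8] and all x ∈ ℝ, the k-th x-derivative of Λ_ω satisfies |Λ_ω^{(k)}(x)| ≤ C_k ω^{(1+k)/2} (1 + √ω |x|) e^{−√ω |x|}. -/

import Mathlib

open Real

/-- The solitary-wave profile of the cubic–quintic NLS. -/
noncomputable def phi (ω x : ℝ) : ℝ :=
  Real.sqrt (4 * ω / (1 + Real.sqrt (1 - 16 * ω / 3) * Real.cosh (2 * Real.sqrt ω * x)))

/-- Λ_ω = ω ∂φ_ω/∂ω. -/
noncomputable def Lam (ω x : ℝ) : ℝ := ω * deriv (fun s : ℝ => phi s x) ω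

namespace Stmt2Aux

noncomputable def DD (a y : ℝ) : ℝ := 1 + a * Real.cosh (2 * y)
noncomputable def uu (a y : ℝ) : ℝ := (Real.sqrt (DD a y))⁻¹
noncomputable def vv (a y : ℝ) : ℝ := a * Real.sinh (2 * y) * (uu a y) ^ 2
noncomputable def ww (a y : ℝ) : ℝ := a * Real.cosh (2 * y) * (uu a y) ^ 2

variable {a y : ℝ}

lemma one_le_DD (ha : 0 ≤ a) : 1 ≤ DD a y := by
  have h := Real.one_le_cosh (2 * y)
  have : 0 ≤ a * Real.cosh (2 * y) := mul_nonneg ha (by linarith)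
  simp only [DD]; linarith

lemma DD_pos (ha : 0 ≤ a) : 0 < DD a y := lt_of_lt_of_le one_pos (one_le_DD ha)

lemma sqrtDD_pos (ha : 0 ≤ a) : 0 < Real.sqrt (DD a y) := Real.sqrt_pos.2 (DD_pos ha)

lemma one_le_sqrtDD (ha : 0 ≤ a) : 1 ≤ Real.sqrt (DD a y) := by
  have := Real.sqrt_le_sqrt (one_le_DD (y := y) ha)
  simpa using this

lemma uu_pos (ha : 0 ≤ a) : 0 < uu a y := inv_pos.2 (sqrtDD_pos ha)

lemma uu_le_one (ha : 0 ≤ a) : uu a y ≤ 1 := by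
  rw [uu, inv_le_one_iff₀]; right; exact one_le_sqrtDD ha

lemma uu_sq (ha : 0 ≤ a) : (uu a y) ^ 2 = (DD a y)⁻¹ := by
  rw [uu, inv_pow, Real.sq_sqrt (DD_pos ha).le]

lemma aCosh_le_DD (ha : 0 ≤ a) : a * Real.cosh (2 * y) ≤ DD a y := by
  simp only [DD]; linarith

lemma abs_sinh_le_cosh (t : ℝ) : |Real.sinh t| ≤ Real.cosh t := by
  rw [abs_le]
  have h1 := Real.cosh_sub_sinh t
  have h2 := Real.cosh_add_sinh t
  have h3 := Real.exp_pos t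
  have h4 := Real.exp_pos (-t)
  constructor <;> nlinarith

lemma abs_ww_le_one (ha : 0 ≤ a) : |ww a y| ≤ 1 := by
  have hc : (0:ℝ) ≤ Real.cosh (2*y) := (Real.cosh_pos (2*y)).le
  rw [ww, uu_sq ha, abs_of_nonneg (mul_nonneg (mul_nonneg ha hc) (inv_nonneg.2 (DD_pos ha).le)), ← div_eq_mul_inv,
    div_le_one (DD_pos ha)]
  exact aCosh_le_DD ha

lemma abs_vv_le_one (ha : 0 ≤ a) : |vv a y| ≤ 1 := by
  rw [vv, uu_sq ha, abs_mul, abs_mul, abs_of_nonneg ha,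
    abs_of_nonneg (inv_nonneg.2 (DD_pos ha).le), ← div_eq_mul_inv]
  rw [div_le_one (DD_pos ha)]
  calc a * |Real.sinh (2*y)| ≤ a * Real.cosh (2*y) :=
        mul_le_mul_of_nonneg_left (abs_sinh_le_cosh _) ha
    _ ≤ DD a y := aCosh_le_DD ha

lemma uu_le_exp (ha : 1/2 ≤ a) : uu a y ≤ 2 * Real.exp (-|y|) := by
  have ha0 : (0:ℝ) ≤ a := by linarith
  have h1 : Real.exp |2*y| / 2 ≤ Real.cosh (2*y) := by
    rw [Real.cosh_eq]
    rcases abs_cases (2*y) with ⟨h,_⟩|⟨h,_⟩ <;> rw [h] <;>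
      nlinarith [Real.exp_pos (2*y), Real.exp_pos (-(2*y))]
  have h2 : Real.exp (2*|y|) / 4 ≤ DD a y := by
    have : a * Real.cosh (2*y) ≤ DD a y := aCosh_le_DD ha0
    have hc := Real.cosh_pos (x := 2*y)
    have habs : |2*y| = 2*|y| := by rw [abs_mul]; norm_num
    nlinarith [h1, habs ▸ h1]
  have h3 : Real.sqrt (Real.exp (2*|y|) / 4) ≤ Real.sqrt (DD a y) := Real.sqrt_le_sqrt h2
  have h4 : Real.sqrt (Real.exp (2*|y|) / 4) = Real.exp |y| / 2 := by
    rw [show Real.exp (2*|y|) = (Real.exp |y|)^2 by rw [← Real.exp_nat_mul]; norm_num,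
      show (4:ℝ) = 2^2 by norm_num, ← div_pow, Real.sqrt_sq (by positivity)]
  rw [h4] at h3
  have h5 : (0:ℝ) < Real.exp |y| / 2 := by positivity
  have := inv_anti₀ h5 h3
  rw [uu]
  calc (Real.sqrt (DD a y))⁻¹ ≤ (Real.exp |y| / 2)⁻¹ := this
    _ = 2 * Real.exp (-|y|) := by rw [Real.exp_neg]; field_simp
end Stmt2Aux

namespace Stmt2Aux
variable {a y : ℝ}

lemma hasDerivAt_DD (a : ℝ) (y : ℝ) : HasDerivAt (DD a) (2 * (a * Real.sinh (2*y))) y := by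
  have h1 : HasDerivAt (fun y : ℝ => 2 * y) 2 y := by
    simpa using (hasDerivAt_id y).const_mul 2
  have h2 : HasDerivAt (fun y : ℝ => Real.cosh (2*y)) (Real.sinh (2*y) * 2) y := h1.cosh
  have h3 : HasDerivAt (fun y : ℝ => 1 + a * Real.cosh (2*y)) (2*(a*Real.sinh (2*y))) y := by
    refine ((h2.const_mul a).const_add 1).congr_deriv ?_; ring
  exact h3

lemma hasDerivAt_uu (ha : 0 ≤ a) : HasDerivAt (uu a) (-(uu a y * vv a y)) y := by
  have h1 : HasDerivAt (fun y => Real.sqrt (DD a y))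
      (2 * (a * Real.sinh (2*y)) / (2 * Real.sqrt (DD a y))) y :=
    (hasDerivAt_DD a y).sqrt (DD_pos ha).ne'
  have h2 := h1.inv (sqrtDD_pos (y := y) ha).ne'
  refine h2.congr_deriv ?_
  have hs := (sqrtDD_pos (y := y) ha).ne'
  have hD := (DD_pos (y := y) ha).ne'
  rw [uu, vv, uu_sq ha]
  field_simp
  rw [Real.sq_sqrt (DD_pos ha).le]

lemma hasDerivAt_vv (ha : 0 ≤ a) :
    HasDerivAt (vv a) (2 * ww a y - 2 * (vv a y)^2) y := by
  have h1 : HasDerivAt (fun y : ℝ => 2 * y) 2 y := by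
    simpa using (hasDerivAt_id y).const_mul 2
  have hs : HasDerivAt (fun y : ℝ => a * Real.sinh (2*y)) (a * (Real.cosh (2*y) * 2)) y :=
    (h1.sinh).const_mul a
  have hu2 : HasDerivAt (fun y => (uu a y)^2) (2 * uu a y ^ (2-1) * (-(uu a y * vv a y))) y :=
    (hasDerivAt_uu ha).pow 2
  have := hs.mul hu2
  refine this.congr_deriv ?_
  simp only [vv, ww, pow_one]
  ring

lemma hasDerivAt_ww (ha : 0 ≤ a) :
    HasDerivAt (ww a) (2 * vv a y - 2 * (vv a y * ww a y)) y := by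
  have h1 : HasDerivAt (fun y : ℝ => 2 * y) 2 y := by
    simpa using (hasDerivAt_id y).const_mul 2
  have hs : HasDerivAt (fun y : ℝ => a * Real.cosh (2*y)) (a * (Real.sinh (2*y) * 2)) y :=
    (h1.cosh).const_mul a
  have hu2 : HasDerivAt (fun y => (uu a y)^2) (2 * uu a y ^ (2-1) * (-(uu a y * vv a y))) y :=
    (hasDerivAt_uu ha).pow 2
  have := hs.mul hu2
  refine this.congr_deriv ?_
  simp only [vv, ww, pow_one]
  ring

end Stmt2Aux

namespace Stmt2Aux

structure Mon where
  c : ℝ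
  e : ℕ
  i : ℕ
  j : ℕ
  l : ℕ

noncomputable def evalM (a : ℝ) (m : Mon) (y : ℝ) : ℝ :=
  m.c * y ^ m.e * uu a y ^ m.i * vv a y ^ m.j * ww a y ^ m.l

def dMon (m : Mon) : List Mon :=
  [⟨m.c * m.e, m.e - 1, m.i, m.j, m.l⟩,
   ⟨-(m.c * m.i), m.e, m.i, m.j + 1, m.l⟩,
   ⟨2 * m.c * m.j, m.e, m.i, m.j - 1, m.l + 1⟩,
   ⟨-(2 * m.c * m.j), m.e, m.i, m.j + 1, m.l⟩,
   ⟨2 * m.c * m.l, m.e, m.i, m.j + 1, m.l - 1⟩,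
   ⟨-(2 * m.c * m.l), m.e, m.i, m.j + 1, m.l⟩]

noncomputable def evalL (a : ℝ) (L : List Mon) (y : ℝ) : ℝ := (L.map fun m => evalM a m y).sum
def dList (L : List Mon) : List Mon := L.flatMap dMon
def normC (L : List Mon) : ℝ := (L.map fun m => |m.c|).sum

lemma pow_pred_mul (n : ℕ) (x : ℝ) : (n:ℝ) * x^(n-1) * x = (n:ℝ) * x^n := by
  cases n with
  | zero => simp
  | succ n => simp [pow_succ]; ring

variable {a y : ℝ}

lemma hasDerivAt_evalM (ha : 0 ≤ a) (m : Mon) :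
    HasDerivAt (fun y => evalM a m y) (evalL a (dMon m) y) y := by
  have hy : HasDerivAt (fun y : ℝ => y ^ m.e) ((m.e : ℝ) * y ^ (m.e - 1)) y := hasDerivAt_pow _ _
  have hu : HasDerivAt (fun y => uu a y ^ m.i)
      ((m.i : ℝ) * uu a y ^ (m.i - 1) * (-(uu a y * vv a y))) y := (hasDerivAt_uu ha).pow _
  have hv : HasDerivAt (fun y => vv a y ^ m.j)
      ((m.j : ℝ) * vv a y ^ (m.j - 1) * (2 * ww a y - 2 * (vv a y)^2)) y := (hasDerivAt_vv ha).pow _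
  have hw : HasDerivAt (fun y => ww a y ^ m.l)
      ((m.l : ℝ) * ww a y ^ (m.l - 1) * (2 * vv a y - 2 * (vv a y * ww a y))) y := (hasDerivAt_ww ha).pow _
  have H := (((hy.const_mul m.c).mul hu).mul hv).mul hw
  refine H.congr_deriv ?_
  symm
  simp only [evalL, dMon, evalM, List.map_cons, List.map_nil, List.sum_cons, List.sum_nil,
    Pi.mul_apply]
  have e1 := pow_pred_mul m.i (uu a y)
  have e2 := pow_pred_mul m.j (vv a y)
  have e3 := pow_pred_mul m.l (ww a y)
  linear_combination (m.c * y^m.e * vv a y ^ m.j * vv a y * ww a y ^ m.l) * e1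
    + (2 * m.c * y^m.e * uu a y ^ m.i * vv a y * ww a y ^ m.l) * e2
    + (2 * m.c * y^m.e * uu a y ^ m.i * vv a y ^ (m.j+1)) * e3

end Stmt2Aux

namespace Stmt2Aux
variable {a y : ℝ}

lemma evalL_nil : evalL a [] y = 0 := by simp [evalL]
lemma evalL_cons (m : Mon) (L : List Mon) :
    evalL a (m :: L) y = evalM a m y + evalL a L y := by simp [evalL]
lemma evalL_append (L₁ L₂ : List Mon) :
    evalL a (L₁ ++ L₂) y = evalL a L₁ y + evalL a L₂ y := by simp [evalL]

lemma hasDerivAt_evalL (ha : 0 ≤ a) (L : List Mon) :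
    HasDerivAt (fun y => evalL a L y) (evalL a (dList L) y) y := by
  induction L with
  | nil => simpa [evalL, dList] using (hasDerivAt_const y (0:ℝ))
  | cons m L ih =>
      have h := (hasDerivAt_evalM ha m).add ih
      have he : evalL a (dList (m :: L)) y = evalL a (dMon m) y + evalL a (dList L) y := by
        rw [dList, List.flatMap_cons, evalL_append]; rfl
      rw [he]
      have hf : (fun y => evalL a (m :: L) y) = fun y => evalM a m y + evalL a L y := by
        funext z; exact evalL_cons m L
      rw [hf]
      exact h

def PredE (L : List Mon) : Prop := ∀ m ∈ L, m.e ≤ 1 ∧ 1 ≤ m.i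
def PredD (d : ℕ) (L : List Mon) : Prop := ∀ m ∈ L, m.e + m.i + m.j + m.l ≤ d

lemma predE_dList {L : List Mon} (h : PredE L) : PredE (dList L) := by
  intro m hm
  rw [dList, List.mem_flatMap] at hm
  obtain ⟨m₀, hm₀, hmem⟩ := hm
  obtain ⟨he, hi⟩ := h m₀ hm₀
  simp only [dMon, List.mem_cons, List.not_mem_nil, or_false] at hmem
  rcases hmem with h|h|h|h|h|h <;> subst h <;> constructor <;> simp <;> omega

lemma predD_dList {L : List Mon} {d : ℕ} (h : PredD d L) : PredD (d+1) (dList L) := by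
  intro m hm
  rw [dList, List.mem_flatMap] at hm
  obtain ⟨m₀, hm₀, hmem⟩ := hm
  have hd := h m₀ hm₀
  simp only [dMon, List.mem_cons, List.not_mem_nil, or_false] at hmem
  rcases hmem with h|h|h|h|h|h <;> subst h <;> simp <;> omega

lemma normC_nil : normC [] = 0 := by simp [normC]
lemma normC_cons (m : Mon) (L : List Mon) : normC (m :: L) = |m.c| + normC L := by simp [normC]
lemma normC_nonneg (L : List Mon) : 0 ≤ normC L := by
  induction L with
  | nil => simp [normC]
  | cons m L ih => rw [normC_cons]; positivity

lemma normC_dList {L : List Mon} {d : ℕ} (h : PredD d L) :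
    normC (dList L) ≤ 4 * d * normC L := by
  induction L with
  | nil => simp [dList, normC]
  | cons m L ih =>
      have hmem : PredD d L := fun m' hm' => h m' (List.mem_cons_of_mem _ hm')
      have hm := h m List.mem_cons_self
      have ihh := ih hmem
      have hstep : normC (dList (m :: L)) = normC (dMon m) + normC (dList L) := by
        rw [dList, List.flatMap_cons, normC, List.map_append, List.sum_append]; rfl
      rw [hstep, normC_cons]
      have hMon : normC (dMon m) ≤ 4 * d * |m.c| := by
        simp only [dMon, normC, List.map_cons, List.map_nil, List.sum_cons, List.sum_nil,
          abs_mul, abs_neg, abs_two, Nat.abs_cast]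
        have h1 : (m.e : ℝ) + m.i + 4 * m.j + 4 * m.l ≤ 4 * d := by
          have : (m.e + m.i + m.j + m.l : ℕ) ≤ d := hm
          push_cast
          have : (m.e : ℝ) + m.i + m.j + m.l ≤ d := by exact_mod_cast this
          nlinarith [Nat.cast_nonneg (α := ℝ) m.j, Nat.cast_nonneg (α := ℝ) m.l,
            Nat.cast_nonneg (α := ℝ) m.e, Nat.cast_nonneg (α := ℝ) m.i]
        have h2 := mul_le_mul_of_nonneg_left h1 (abs_nonneg m.c)
        linarith
      have h3 := mul_le_mul_of_nonneg_left (normC_nonneg L) (by positivity : (0:ℝ) ≤ 4 * d)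
      linarith

lemma abs_evalM_le (ha : 0 ≤ a) (ha2 : 1/2 ≤ a) {m : Mon} (he : m.e ≤ 1) (hi : 1 ≤ m.i) :
    |evalM a m y| ≤ |m.c| * ((1 + |y|) * (2 * Real.exp (-|y|))) := by
  have hu1 := uu_le_one (y := y) ha
  have hu0 := (uu_pos (y := y) ha).le
  have huik : uu a y ^ m.i ≤ uu a y := by
    calc uu a y ^ m.i ≤ uu a y ^ 1 := pow_le_pow_of_le_one hu0 hu1 hi
      _ = uu a y := pow_one _
  have hv : |vv a y ^ m.j| ≤ 1 := by
    rw [abs_pow]; exact pow_le_one₀ (abs_nonneg _) (abs_vv_le_one ha)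
  have hw : |ww a y ^ m.l| ≤ 1 := by
    rw [abs_pow]; exact pow_le_one₀ (abs_nonneg _) (abs_ww_le_one ha)
  have hy : |y ^ m.e| ≤ 1 + |y| := by
    rw [abs_pow]
    interval_cases h : m.e
    · simpa using abs_nonneg y
    · simpa using by linarith [abs_nonneg y]
  have hue : |uu a y ^ m.i| ≤ 2 * Real.exp (-|y|) := by
    rw [abs_of_nonneg (pow_nonneg hu0 _)]
    exact huik.trans (uu_le_exp ha2)
  calc |evalM a m y| = |m.c| * (|y ^ m.e| * (|uu a y ^ m.i| * (|vv a y ^ m.j| * |ww a y ^ m.l|))) := by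
        rw [evalM]; rw [abs_mul, abs_mul, abs_mul, abs_mul]; ring
    _ ≤ |m.c| * ((1 + |y|) * (2 * Real.exp (-|y|))) := by
        have h2e : (0:ℝ) ≤ 2 * Real.exp (-|y|) := by positivity
        have hvw : |vv a y ^ m.j| * |ww a y ^ m.l| ≤ 1 :=
          mul_le_one₀ hv (abs_nonneg _) hw
        have : |uu a y ^ m.i| * (|vv a y ^ m.j| * |ww a y ^ m.l|) ≤ 2 * Real.exp (-|y|) := by
          calc |uu a y ^ m.i| * (|vv a y ^ m.j| * |ww a y ^ m.l|) ≤ |uu a y ^ m.i| * 1 :=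
                mul_le_mul_of_nonneg_left hvw (abs_nonneg _)
            _ = |uu a y ^ m.i| := mul_one _
            _ ≤ 2 * Real.exp (-|y|) := hue
        have h1y : (0:ℝ) ≤ 1 + |y| := by positivity
        have := mul_le_mul hy this (by positivity) h1y
        exact mul_le_mul_of_nonneg_left this (abs_nonneg _)

lemma abs_evalL_le (ha : 0 ≤ a) (ha2 : 1/2 ≤ a) {L : List Mon} (h : PredE L) :
    |evalL a L y| ≤ normC L * ((1 + |y|) * (2 * Real.exp (-|y|))) := by
  induction L with
  | nil => simp [evalL, normC]
  | cons m L ih =>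
      have h1 := h m List.mem_cons_self
      have h2 : PredE L := fun m' hm' => h m' (List.mem_cons_of_mem _ hm')
      rw [evalL_cons, normC_cons]
      calc |evalM a m y + evalL a L y| ≤ |evalM a m y| + |evalL a L y| := abs_add_le _ _
        _ ≤ |m.c| * ((1 + |y|) * (2 * Real.exp (-|y|))) + normC L * ((1 + |y|) * (2 * Real.exp (-|y|))) :=
            add_le_add (abs_evalM_le ha ha2 h1.1 h1.2) (ih h2)
        _ = (|m.c| + normC L) * ((1 + |y|) * (2 * Real.exp (-|y|))) := by ring

end Stmt2Aux

namespace Stmt2Aux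

noncomputable def L0 (ω : ℝ) : List Mon :=
  [⟨1,0,1,0,0⟩, ⟨8*ω/(3-16*ω),0,1,0,1⟩, ⟨-1,1,1,1,0⟩]

lemma Lam_eq {ω : ℝ} (hω : 0 < ω) (hω8 : ω ≤ 1/8) (x : ℝ) :
    Lam ω x = Real.sqrt ω * evalL (Real.sqrt (1 - 16*ω/3)) (L0 ω) (Real.sqrt ω * x) := by
  set r := Real.sqrt ω with hrdef
  set a := Real.sqrt (1 - 16*ω/3) with hadef
  have h13 : (0:ℝ) < 1 - 16*ω/3 := by linarith
  have hr : 0 < r := Real.sqrt_pos.2 hω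
  have ha0 : 0 < a := Real.sqrt_pos.2 h13
  have ha2 : a^2 = 1 - 16*ω/3 := Real.sq_sqrt h13.le
  have hr2 : r^2 = ω := Real.sq_sqrt hω.le
  set C := Real.cosh (2*r*x) with hCdef
  set S := Real.sinh (2*r*x) with hSdef
  have hC1 : 1 ≤ C := Real.one_le_cosh _
  set Den := 1 + a * C with hDendef
  have hden : 0 < Den := by
    have hac : 0 < a * C := mul_pos ha0 (by linarith)
    show (0:ℝ) < 1 + a * C
    linarith
  have hQ : 0 < 4 * ω / Den := by positivity
  -- derivative of s ↦ phi s x at ω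
  have h1 : HasDerivAt (fun s : ℝ => 1 - 16*s/3) (-(16*1/3)) ω := by
    simpa using (((hasDerivAt_id ω).const_mul (16:ℝ)).div_const 3).const_sub 1
  have h2 : HasDerivAt (fun s : ℝ => Real.sqrt (1 - 16*s/3)) (-(16*1/3) / (2*a)) ω :=
    h1.sqrt h13.ne'
  have h4 : HasDerivAt (fun s : ℝ => 2 * Real.sqrt s * x) (2*(1/(2*r))*x) ω :=
    ((Real.hasDerivAt_sqrt hω.ne').const_mul 2).mul_const x
  have h5 : HasDerivAt (fun s : ℝ => Real.cosh (2 * Real.sqrt s * x)) (S * (2*(1/(2*r))*x)) ω :=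
    h4.cosh
  have h6 : HasDerivAt (fun s : ℝ => 1 + Real.sqrt (1 - 16*s/3) * Real.cosh (2 * Real.sqrt s * x))
      ((-(16*1/3) / (2*a)) * C + a * (S * (2*(1/(2*r))*x))) ω := (h2.mul h5).const_add 1
  have h7 : HasDerivAt (fun s : ℝ =>
        4 * s / (1 + Real.sqrt (1 - 16*s/3) * Real.cosh (2 * Real.sqrt s * x)))
      ((4 * 1 * Den - 4 * ω * ((-(16*1/3) / (2*a)) * C + a * (S * (2*(1/(2*r))*x)))) / Den^2) ω := by
    have hnum : HasDerivAt (fun s : ℝ => 4 * s) (4*1) ω := (hasDerivAt_id ω).const_mul 4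
    exact hnum.div h6 hden.ne'
  have h8 : HasDerivAt (fun s : ℝ => phi s x)
      (((4 * 1 * Den - 4 * ω * ((-(16*1/3) / (2*a)) * C + a * (S * (2*(1/(2*r))*x)))) / Den^2)
        / (2 * Real.sqrt (4 * ω / Den))) ω := by
    have := h7.sqrt hQ.ne'
    simpa [phi] using this
  -- value of the square root
  have hsq4 : Real.sqrt (4 * ω / Den) = 2 * r / Real.sqrt Den := by
    rw [Real.sqrt_div (by positivity) Den, Real.sqrt_mul (by norm_num : (0:ℝ) ≤ 4),
      show Real.sqrt 4 = 2 by
        rw [show (4:ℝ) = 2^2 by norm_num, Real.sqrt_sq (by norm_num : (0:ℝ) ≤ 2)]]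
  set d := Real.sqrt Den with hddef
  have hd : 0 < d := Real.sqrt_pos.2 hden
  have hd2 : d^2 = Den := Real.sq_sqrt hden.le
  have hLam : Lam ω x =
      ω * (((4 * 1 * Den - 4 * ω * ((-(16*1/3) / (2*a)) * C + a * (S * (2*(1/(2*r))*x)))) / Den^2)
        / (2 * (2 * r / d))) := by
    rw [Lam, h8.deriv, hsq4]
  rw [hLam]
  -- expand the right-hand side
  have hDD : DD a (r*x) = Den := by rw [DD, hDendef, hCdef, ← mul_assoc]
  have huu : uu a (r*x) = d⁻¹ := by rw [uu, hDD, hddef]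
  have hvv : vv a (r*x) = a * S * (d⁻¹)^2 := by
    rw [vv, huu, hSdef, ← mul_assoc]
  have hww : ww a (r*x) = a * C * (d⁻¹)^2 := by
    rw [ww, huu, hCdef, ← mul_assoc]
  have hRHS : evalL a (L0 ω) (r*x) =
      1 * (r*x)^(0:ℕ) * (d⁻¹)^(1:ℕ) * (a * S * (d⁻¹)^2)^(0:ℕ) * (a * C * (d⁻¹)^2)^(0:ℕ)
      + (8*ω/(3-16*ω) * (r*x)^(0:ℕ) * (d⁻¹)^(1:ℕ) * (a * S * (d⁻¹)^2)^(0:ℕ) * (a * C * (d⁻¹)^2)^(1:ℕ)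
      + ((-1) * (r*x)^(1:ℕ) * (d⁻¹)^(1:ℕ) * (a * S * (d⁻¹)^2)^(1:ℕ) * (a * C * (d⁻¹)^2)^(0:ℕ)
      + 0)) := by
    simp only [evalL, L0, List.map_cons, List.map_nil, List.sum_cons, List.sum_nil, evalM,
      huu, hvv, hww]
  rw [hRHS]
  have h316 : 3 - 16*ω = 3*a^2 := by rw [ha2]; ring
  rw [h316, ← hr2, ← hd2]
  field_simp
  ring
end Stmt2Aux

namespace Stmt2Aux

lemma L0_predE {ω : ℝ} : PredE (L0 ω) := by
  intro m hm
  simp only [L0, List.mem_cons, List.not_mem_nil, or_false] at hm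
  rcases hm with h|h|h <;> subst h <;> constructor <;> simp

lemma L0_predD {ω : ℝ} : PredD 3 (L0 ω) := by
  intro m hm
  simp only [L0, List.mem_cons, List.not_mem_nil, or_false] at hm
  rcases hm with h|h|h <;> subst h <;> simp

lemma L0_normC {ω : ℝ} (hω : 0 < ω) (hω8 : ω ≤ 1/8) : normC (L0 ω) ≤ 3 := by
  simp only [L0, normC, List.map_cons, List.map_nil, List.sum_cons, List.sum_nil]
  have h1 : |(1:ℝ)| = 1 := by norm_num
  have h3 : |(-1:ℝ)| = 1 := by norm_num
  have h2 : |8*ω/(3-16*ω)| ≤ 1 := by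
    rw [abs_div, abs_of_nonneg (by linarith : (0:ℝ) ≤ 8*ω),
      abs_of_nonneg (by linarith : (0:ℝ) ≤ 3-16*ω), div_le_one (by linarith)]
    linarith
  rw [h1, h3]
  linarith

noncomputable def Nk : ℕ → ℝ := fun k => 3 * ∏ t ∈ Finset.range k, (4*((3:ℝ)+t))

lemma Nk_pos (k : ℕ) : 0 < Nk k := by
  have : ∀ t ∈ Finset.range k, (0:ℝ) < 4*((3:ℝ)+t) := by
    intro t _; positivity
  have := Finset.prod_pos this
  rw [Nk]; positivity

lemma Nk_succ (k : ℕ) : Nk (k+1) = 4*((3:ℝ)+k) * Nk k := by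
  rw [Nk, Nk, Finset.prod_range_succ]; ring

end Stmt2Aux

open Stmt2Aux

theorem stmt_2 :
    ∀ k : ℕ, ∃ C : ℝ, 0 < C ∧
      ∀ ω ∈ Set.Ioc (0 : ℝ) (1 / 8), ∀ x : ℝ,
        |iteratedDeriv k (Lam ω) x| ≤
          C * ω ^ ((1 + (k : ℝ)) / 2) * (1 + Real.sqrt ω * |x|) *
            Real.exp (-Real.sqrt ω * |x|) := by
  intro k
  refine ⟨2 * Nk k, by have := Nk_pos k; linarith, ?_⟩
  rintro ω ⟨hω, hω8⟩ x
  set r := Real.sqrt ω with hrdef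
  set a := Real.sqrt (1 - 16*ω/3) with hadef
  have h13 : (0:ℝ) < 1 - 16*ω/3 := by linarith
  have hr : 0 < r := Real.sqrt_pos.2 hω
  have ha0 : 0 < a := Real.sqrt_pos.2 h13
  have ha2 : a^2 = 1 - 16*ω/3 := Real.sq_sqrt h13.le
  have ha12 : 1/2 ≤ a := by nlinarith
  -- the iterated derivative formula
  have key : ∀ n : ℕ, ∀ z : ℝ,
      iteratedDeriv n (Lam ω) z = r * r^n * evalL a (dList^[n] (L0 ω)) (r * z) := by
    intro n
    induction n with
    | zero =>
        intro z
        simpa [iteratedDeriv_zero] using Lam_eq hω hω8 z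
    | succ n ih =>
        intro z
        rw [iteratedDeriv_succ]
        have hfun : iteratedDeriv n (Lam ω) = fun z => r * r^n * evalL a (dList^[n] (L0 ω)) (r * z) := by
          funext z'; exact ih z'
        rw [hfun]
        have hinner : HasDerivAt (fun z : ℝ => r * z) r z := by
          simpa using (hasDerivAt_id z).const_mul r
        have houter := (hasDerivAt_evalL (a := a) (y := r * z) ha0.le (dList^[n] (L0 ω)))
        have hcomp : HasDerivAt (fun z : ℝ => r * r^n * evalL a (dList^[n] (L0 ω)) (r * z))
            (r * r^n * (evalL a (dList (dList^[n] (L0 ω))) (r*z) * r)) z :=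
          (houter.comp z hinner).const_mul (r * r^n)
        rw [hcomp.deriv, Function.iterate_succ_apply']
        ring
  have hPredE : PredE (dList^[k] (L0 ω)) := by
    induction k with
    | zero => exact L0_predE
    | succ n ih => rw [Function.iterate_succ_apply']; exact predE_dList ih
  have hnorm : normC (dList^[k] (L0 ω)) ≤ Nk k := by
    clear key hPredE
    induction k with
    | zero => simpa [Nk] using L0_normC hω hω8
    | succ n ih =>
        have hPD : PredD (3+n) (dList^[n] (L0 ω)) := by
          clear ih
          induction n with
          | zero => exact L0_predD
          | succ m ihm =>
              rw [Function.iterate_succ_apply']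
              intro mm hmm
              have := predD_dList ihm mm hmm
              omega
        rw [Function.iterate_succ_apply']
        calc normC (dList (dList^[n] (L0 ω))) ≤ 4*(((3+n : ℕ)):ℝ) * normC (dList^[n] (L0 ω)) :=
              normC_dList hPD
          _ = 4*((3:ℝ)+n) * normC (dList^[n] (L0 ω)) := by push_cast; ring
          _ ≤ 4*((3:ℝ)+n) * Nk n := by
              have h4 : (0:ℝ) ≤ 4*((3:ℝ)+n) := by positivity
              exact mul_le_mul_of_nonneg_left ih h4
          _ = Nk (n+1) := (Nk_succ n).symm
  -- final bound
  have hbound := abs_evalL_le (a := a) (y := r * x) ha0.le ha12 hPredE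
  rw [key k x]
  rw [abs_mul, abs_mul]
  have hrx : |r * x| = r * |x| := by rw [abs_mul, abs_of_nonneg hr.le]
  rw [hrx] at hbound
  have hrabs : |r| = r := abs_of_nonneg hr.le
  have hrpow : |r ^ k| = r ^ k := abs_of_nonneg (pow_nonneg hr.le k)
  rw [hrabs, hrpow]
  have hrpow2 : r * r^k = ω ^ ((1 + (k:ℝ)) / 2) := by
    rw [hrdef, Real.sqrt_eq_rpow, ← Real.rpow_natCast (ω ^ ((1:ℝ)/2)) k,
      ← Real.rpow_mul hω.le, ← Real.rpow_add hω]
    congr 1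
    ring
  calc r * r^k * |evalL a (dList^[k] (L0 ω)) (r * x)|
      ≤ r * r^k * (Nk k * ((1 + r*|x|) * (2 * Real.exp (-(r*|x|))))) := by
        refine mul_le_mul_of_nonneg_left ?_ (by positivity)
        exact hbound.trans (mul_le_mul_of_nonneg_right hnorm (by positivity))
    _ = 2 * Nk k * (r*r^k) * (1 + r*|x|) * Real.exp (-(r*|x|)) := by ring
    _ = 2 * Nk k * ω ^ ((1 + (k:ℝ)) / 2) * (1 + r*|x|) * Real.exp (-r*|x|) := by
        rw [hrpow2, neg_mul]
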